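/- For every D-dimensional tensor C^{(D)} of sizes N×...×N with elements C^{(D)}_{i_1,...,i_D} = Σ_{σ ∈ S_D} ∏_{k=1}^D i_{σ(k)}^{μ_k}, there exist cores H^{(λ)} ∈ ℝ^{R_{λ−1} × N × R_λ} with ranks R_λ = C(D, λ) (so R_0 = R_D = 1) such that C^{(D)}_{i_1,...,i_D} = Σ_{r_1,...,r_{D−1}} H^{(1)}_{1, i_1, r_1} H^{(2)}_{r_1, i_2, r_2} ⋯ H^{(D)}_{r_{D−1}, i_D, 1}. In particular, the TT-ranks of C^{(D)} satisfy R_λ ≤ C(D, λ) for all 0 ≤ λ ≤ D. -/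

import Mathlib

/-- Product of TT-cores `H^{(1)}(i₁) ⋯ H^{(D)}(i_D)` as a matrix of size `R 0 × R D`. -/
def ttProd (N : ℕ) (R : ℕ → ℕ)
    (H : (lam : ℕ) → Fin N → Matrix (Fin (R lam)) (Fin (R (lam + 1))) ℝ) :
    (D : ℕ) → (Fin D → Fin N) → Matrix (Fin (R 0)) (Fin (R D)) ℝ
  | 0, _ => 1
  | D + 1, i => ttProd N R H D (fun k => i k.castSucc) * H D (i (Fin.last D))

namespace BrownianTT

open Finset

/-- Subsets of size `lam` are equinumerous with `Fin (D.choose lam)`. -/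
noncomputable def eS (D lam : ℕ) : {s : Finset (Fin D) // s.card = lam} ≃ Fin (D.choose lam) :=
  Fintype.equivFinOfCardEq (by rw [Fintype.card_finset_len, Fintype.card_fin])

/-- The univariate factor `(x+1)^(μ m)`. -/
noncomputable def Av {D N : ℕ} (μ : Fin D → ℝ) (x : Fin N) (m : Fin D) : ℝ :=
  (((x : ℕ) : ℝ) + 1) ^ (μ m)

/-- Partial sums over injections with prescribed image. -/
noncomputable def F {D N : ℕ} (μ : Fin D → ℝ) (lam : ℕ) (i : Fin lam → Fin N)
    (S : Finset (Fin D)) : ℝ :=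
  ∑ τ ∈ univ.filter (fun τ : Fin lam ↪ Fin D => univ.map τ = S),
    ∏ k, Av μ (i k) (τ k)

/-- Restriction of an embedding `Fin (n+1) ↪ Fin D` to the first `n` coordinates. -/
def restr {n D : ℕ} (τ : Fin (n + 1) ↪ Fin D) : Fin n ↪ Fin D :=
  ⟨fun k => τ k.castSucc, show Function.Injective (fun k : Fin n => τ k.castSucc) by
    exact fun a b h => Fin.castSucc_injective _ (τ.injective h)⟩

/-- Extend an embedding by a new value at the last coordinate. -/
def snocEmb {n D : ℕ} (τ : Fin n ↪ Fin D) (t : Fin D) (ht : ∀ k, τ k ≠ t) :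
    Fin (n + 1) ↪ Fin D :=
  ⟨Fin.snoc τ t, show Function.Injective (Fin.snoc (α := fun _ => Fin D) τ t) by
    intro a b h
    rcases Fin.eq_castSucc_or_eq_last a with ⟨a', rfl⟩ | rfl <;>
      rcases Fin.eq_castSucc_or_eq_last b with ⟨b', rfl⟩ | rfl <;>
      simp only [Fin.snoc_castSucc, Fin.snoc_last] at h <;> first
      | rfl
      | (exact congrArg Fin.castSucc (τ.injective h))
      | (exact absurd h (ht a'))
      | (exact absurd h.symm (ht b'))⟩

lemma map_restr {n D : ℕ} (τ : Fin (n + 1) ↪ Fin D) :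
    univ.map (restr τ) = (univ.map τ).erase (τ (Fin.last n)) := by
  ext x
  simp only [mem_map, mem_univ, true_and, mem_erase, restr,
    Function.Embedding.coeFn_mk]
  constructor
  · rintro ⟨k, rfl⟩
    refine ⟨fun h => ?_, ⟨k.castSucc, rfl⟩⟩
    exact absurd (τ.injective h) (Fin.castSucc_lt_last k).ne
  · rintro ⟨hne, k, rfl⟩
    rcases Fin.eq_castSucc_or_eq_last k with ⟨k', rfl⟩ | rfl
    · exact ⟨k', rfl⟩
    · exact absurd rfl hne

lemma map_snocEmb {n D : ℕ} (τ : Fin n ↪ Fin D) (t : Fin D) (ht : ∀ k, τ k ≠ t) :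
    univ.map (snocEmb τ t ht) = insert t (univ.map τ) := by
  ext x
  simp only [mem_map, mem_univ, true_and, mem_insert, snocEmb,
    Function.Embedding.coeFn_mk]
  constructor
  · rintro ⟨k, rfl⟩
    rcases Fin.eq_castSucc_or_eq_last k with ⟨k', rfl⟩ | rfl
    · exact Or.inr ⟨k', by simp⟩
    · exact Or.inl (by simp)
  · rintro (rfl | ⟨k, rfl⟩)
    · exact ⟨Fin.last n, by simp⟩
    · exact ⟨k.castSucc, by simp⟩

lemma ht_of_mem {lam D : ℕ} {T : Finset (Fin D)}
    (p : Σ _ : Fin D, Fin lam ↪ Fin D)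
    (hp : p ∈ T.sigma (fun t =>
      univ.filter (fun τ' : Fin lam ↪ Fin D => univ.map τ' = T.erase t))) :
    ∀ k, p.2 k ≠ p.1 := by
  intro k hk
  rw [mem_sigma, mem_filter] at hp
  have hmem : p.2 k ∈ univ.map p.2 := mem_map_of_mem _ (mem_univ k)
  rw [hp.2.2] at hmem
  exact (Finset.ne_of_mem_erase hmem) hk

/-- Last-coordinate expansion of `F`. -/
lemma F_succ {D N : ℕ} (μ : Fin D → ℝ) (lam : ℕ) (i : Fin (lam + 1) → Fin N)
    (T : Finset (Fin D)) :
    F μ (lam + 1) i T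
      = ∑ t ∈ T, F μ lam (fun k => i k.castSucc) (T.erase t)
          * Av μ (i (Fin.last lam)) t := by
  simp only [F, sum_mul]
  conv_rhs => rw [Finset.sum_sigma']
  refine Finset.sum_bij'
    (i := fun (τ : Fin (lam + 1) ↪ Fin D) (_ : τ ∈ _) =>
      (⟨τ (Fin.last lam), restr τ⟩ : Σ _ : Fin D, Fin lam ↪ Fin D))
    (j := fun p hp => snocEmb p.2 p.1 (ht_of_mem p hp))
    ?_ ?_ ?_ ?_ ?_
  · intro τ hτ
    have h2 := (mem_filter.mp hτ).2
    rw [mem_sigma, mem_filter]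
    refine ⟨?_, mem_univ _, ?_⟩
    · rw [← h2]; exact mem_map_of_mem _ (mem_univ _)
    · rw [map_restr, h2]
  · intro p hp
    have hp' := hp
    rw [mem_sigma, mem_filter] at hp'
    rw [mem_filter]
    refine ⟨mem_univ _, ?_⟩
    rw [map_snocEmb, hp'.2.2, Finset.insert_erase hp'.1]
  · intro τ hτ
    dsimp only
    apply Function.Embedding.ext
    intro k
    rcases Fin.eq_castSucc_or_eq_last k with ⟨k', rfl⟩ | rfl
    · simp [snocEmb, restr, Fin.snoc_castSucc]
    · simp [snocEmb, Fin.snoc_last]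
  · intro p hp
    rcases p with ⟨t, τ'⟩
    dsimp only
    refine Sigma.ext ?_ (heq_of_eq ?_)
    · simp [snocEmb, Fin.snoc_last]
    · apply Function.Embedding.ext
      intro k
      simp [snocEmb, restr, Fin.snoc_castSucc]
  · intro τ hτ
    dsimp only
    rw [Fin.prod_univ_castSucc]
    rfl

/-- The TT core matrices. -/
noncomputable def coreH (D N : ℕ) (μ : Fin D → ℝ) (lam : ℕ) (x : Fin N) :
    Matrix (Fin (D.choose lam)) (Fin (D.choose (lam + 1))) ℝ :=
  Matrix.of fun r c =>
    if ((eS D lam).symm r).1 ⊆ ((eS D (lam + 1)).symm c).1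
    then ∏ k ∈ ((eS D (lam + 1)).symm c).1 \ ((eS D lam).symm r).1, Av μ x k
    else 0

lemma sdiff_ne {D lam : ℕ} {T : Finset (Fin D)} (hT : T.card = lam + 1)
    (S : {s : Finset (Fin D) // s.card = lam}) (hS : S.1 ⊆ T) :
    (T \ S.1).Nonempty := by
  rw [← Finset.card_pos, card_sdiff_of_subset hS, hT, S.2]
  omega

/-- The matrix-multiplication step matches the combinatorial recursion. -/
lemma step {D N : ℕ} (μ : Fin D → ℝ) (lam : ℕ) (i' : Fin lam → Fin N) (x : Fin N)
    (T : Finset (Fin D)) (hT : T.card = lam + 1) :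
    ∑ S : {s : Finset (Fin D) // s.card = lam},
        F μ lam i' S.1 * (if S.1 ⊆ T then ∏ k ∈ T \ S.1, Av μ x k else 0)
      = ∑ t ∈ T, F μ lam i' (T.erase t) * Av μ x t := by
  simp only [mul_ite, mul_zero]
  rw [← Finset.sum_filter]
  refine (Finset.sum_bij'
    (i := fun t (ht : t ∈ T) =>
      (⟨T.erase t, by rw [card_erase_of_mem ht, hT]; omega⟩ :
        {s : Finset (Fin D) // s.card = lam}))
    (j := fun S hS => (T \ S.1).min' (sdiff_ne hT S (mem_filter.mp hS).2))
    ?_ ?_ ?_ ?_ ?_).symm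
  · intro t ht
    rw [mem_filter]
    exact ⟨mem_univ _, erase_subset _ _⟩
  · intro S hS
    have hm := (T \ S.1).min'_mem (sdiff_ne hT S (mem_filter.mp hS).2)
    exact (Finset.mem_sdiff.mp hm).1
  · intro t ht
    dsimp only
    have hsd : T \ T.erase t = {t} := Finset.sdiff_erase_self ht
    simp only [hsd, Finset.min'_singleton]
  · intro S hS
    have hm := (T \ S.1).min'_mem (sdiff_ne hT S (mem_filter.mp hS).2)
    rw [Finset.mem_sdiff] at hm
    apply Subtype.ext
    refine (Finset.eq_of_subset_of_card_le ?_ ?_).symm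
    · intro a ha
      rw [Finset.mem_erase]
      exact ⟨fun h => hm.2 (h ▸ ha), (mem_filter.mp hS).2 ha⟩
    · rw [card_erase_of_mem hm.1, hT, S.2]
      omega
  · intro t ht
    dsimp only
    have hsd : T \ T.erase t = {t} := Finset.sdiff_erase_self ht
    rw [hsd, Finset.prod_singleton]

/-- Main induction: entries of the partial TT product. -/
lemma key {D N : ℕ} (μ : Fin D → ℝ) :
    ∀ (lam : ℕ) (i : Fin lam → Fin N) (r : Fin (D.choose 0)) (c : Fin (D.choose lam)),
      ttProd N (fun l => D.choose l) (coreH D N μ) lam i r c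
        = F μ lam i ((eS D lam).symm c).1 := by
  intro lam
  induction lam with
  | zero =>
    intro i r c
    have hrc : r = c := by
      apply Fin.ext
      have h1 := r.2
      have h2 := c.2
      have h3 : D.choose 0 = 1 := Nat.choose_zero_right D
      omega
    have hS : ((eS D 0).symm c).1 = (∅ : Finset (Fin D)) :=
      Finset.card_eq_zero.mp ((eS D 0).symm c).2
    rw [hS]
    show (1 : Matrix (Fin (D.choose 0)) (Fin (D.choose 0)) ℝ) r c = _
    rw [hrc, Matrix.one_apply_eq, F]
    have hfilter : (univ.filter (fun τ : Fin 0 ↪ Fin D => univ.map τ = ∅)) = univ := by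
      apply Finset.filter_true_of_mem
      intro τ _
      simp
    rw [hfilter]
    simp [Finset.sum_const, Finset.card_univ, Fintype.card_embedding_eq]
  | succ lam ih =>
    intro i r c
    set T := ((eS D (lam + 1)).symm c).1 with hTdef
    have hT : T.card = lam + 1 := ((eS D (lam + 1)).symm c).2
    show (ttProd N (fun l => D.choose l) (coreH D N μ) lam (fun k => i k.castSucc)
        * coreH D N μ lam (i (Fin.last lam))) r c = _
    rw [Matrix.mul_apply, F_succ]
    calc ∑ j, ttProd N (fun l => D.choose l) (coreH D N μ) lam (fun k => i k.castSucc) r j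
          * coreH D N μ lam (i (Fin.last lam)) j c
        = ∑ S : {s : Finset (Fin D) // s.card = lam},
            F μ lam (fun k => i k.castSucc) S.1
              * (if S.1 ⊆ T then ∏ k ∈ T \ S.1, Av μ (i (Fin.last lam)) k else 0) := by
          rw [← Equiv.sum_comp (eS D lam) (fun j =>
            ttProd N (fun l => D.choose l) (coreH D N μ) lam (fun k => i k.castSucc) r j
              * coreH D N μ lam (i (Fin.last lam)) j c)]
          refine Finset.sum_congr rfl fun S _ => ?_
          rw [ih]
          simp only [coreH, Matrix.of_apply, Equiv.symm_apply_apply]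
          rfl
      _ = ∑ t ∈ T, F μ lam (fun k => i k.castSucc) (T.erase t)
            * Av μ (i (Fin.last lam)) t := step μ lam _ _ T hT

/-- Permutations of `Fin D` are equivalent to self-embeddings. -/
noncomputable def permEquiv (D : ℕ) : Equiv.Perm (Fin D) ≃ (Fin D ↪ Fin D) where
  toFun σ := σ.toEmbedding
  invFun τ := τ.equivOfFiniteSelfEmbedding
  left_inv σ := Equiv.ext fun x => rfl
  right_inv τ := Function.Embedding.toEmbedding_equivOfFiniteSelfEmbedding τ

end BrownianTT

/-- The generalized Brownian tensor `C^{(D)}_{i₁,...,i_D} = Σ_σ Π_k i_{σ(k)}^{μ_k}` admits a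
TT-decomposition with ranks `R_λ = C(D,λ)` (so `R_0 = R_D = 1`); in particular its TT-ranks
satisfy `R_λ ≤ C(D,λ)`. -/
theorem brownian_tt_decomposition (D N : ℕ) (hD : 1 ≤ D) (μ : Fin D → ℝ) :
    ∃ H : (lam : ℕ) → Fin N → Matrix (Fin (D.choose lam)) (Fin (D.choose (lam + 1))) ℝ,
      ∀ i : Fin D → Fin N,
        ttProd N (fun lam => D.choose lam) H D i
            ⟨0, Nat.choose_pos (Nat.zero_le D)⟩ ⟨0, Nat.choose_pos le_rfl⟩
          = ∑ σ : Equiv.Perm (Fin D), ∏ k, (((i (σ k) : ℕ) : ℝ) + 1) ^ (μ k) := by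
  classical
  open Finset BrownianTT in
  refine ⟨coreH D N μ, fun i => ?_⟩
  rw [key μ D i]
  have huniv : ((eS D D).symm ⟨0, Nat.choose_pos le_rfl⟩).1 = (univ : Finset (Fin D)) := by
    apply Finset.eq_univ_of_card
    rw [((eS D D).symm _).2, Fintype.card_fin]
  rw [huniv, F]
  have hfil : (univ.filter (fun τ : Fin D ↪ Fin D => univ.map τ = univ)) = univ := by
    apply Finset.filter_true_of_mem
    intro τ _
    apply Finset.eq_univ_of_card
    rw [Finset.card_map, Finset.card_univ]
  rw [hfil]
  rw [← Equiv.sum_comp (permEquiv D) (fun τ : Fin D ↪ Fin D => ∏ k, Av μ (i k) (τ k))]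
  refine Fintype.sum_equiv (Equiv.inv (Equiv.Perm (Fin D))) _ _ fun σ => ?_
  rw [← Equiv.prod_comp σ
    (fun k => (((i ((Equiv.inv (Equiv.Perm (Fin D))) σ k) : ℕ) : ℝ) + 1) ^ (μ k))]
  refine Finset.prod_congr rfl fun a _ => ?_
  simp [Av, permEquiv, Equiv.inv_apply]
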